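/- Every element of ℤ[√3] with norm in the interval [-6, -1] has norm -3 or -2, assuming it corresponds to a coprime pair (i.e., is primitive). Every solution of Nm(a) = -3 in ℤ[√3] is of the form ±√3·u_f^n, and every solution of Nm(a) = -2 is of the form ±(-1+√3)·u_f^n, where u_f = 2 + √3. -/

import Mathlib

noncomputable def fS (s : Pell.Solution₁ 3) : ℝ := (s.x : ℝ) + s.y * Real.sqrt 3

lemma sqrt3_sq : Real.sqrt 3 * Real.sqrt 3 = 3 := Real.mul_self_sqrt (by norm_num)

lemma fS_one : fS 1 = 1 := by simp [fS]

lemma fS_mul (a b : Pell.Solution₁ 3) : fS (a * b) = fS a * fS b := by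
  simp only [fS, Pell.Solution₁.x_mul, Pell.Solution₁.y_mul]
  push_cast
  linear_combination (-(a.y : ℝ) * b.y) * sqrt3_sq

lemma fS_inv_mul (a : Pell.Solution₁ 3) : fS a * fS a⁻¹ = 1 := by
  simp only [fS, Pell.Solution₁.x_inv, Pell.Solution₁.y_inv]
  have h := a.prop
  have : ((a.x : ℝ))^2 - 3 * (a.y : ℝ)^2 = 1 := by exact_mod_cast h
  push_cast
  linear_combination this - (a.y:ℝ)^2 * sqrt3_sq
lemma fS_ne_zero (a : Pell.Solution₁ 3) : fS a ≠ 0 := by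
  intro h
  have := fS_inv_mul a
  rw [h, zero_mul] at this
  norm_num at this

lemma fS_zpow (a : Pell.Solution₁ 3) (n : ℤ) : fS (a ^ n) = fS a ^ n := by
  induction n using Int.induction_on with
  | zero => simpa using fS_one
  | succ n ih => rw [zpow_add_one, fS_mul, ih, zpow_add_one₀ (fS_ne_zero a)]
  | pred n ih =>
      rw [zpow_sub_one, fS_mul, ih, zpow_sub_one₀ (fS_ne_zero a)]
      rw [inv_eq_of_mul_eq_one_right (fS_inv_mul a)]

lemma fS_neg (a : Pell.Solution₁ 3) : fS (-a) = -fS a := by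
  simp only [fS, Pell.Solution₁.x_neg, Pell.Solution₁.y_neg]
  push_cast
  ring

def fund : Pell.Solution₁ 3 := Pell.Solution₁.mk 2 1 (by norm_num)

lemma fund_isFundamental : Pell.IsFundamental fund := by
  refine ⟨by norm_num [fund], by norm_num [fund], fun {b} hb => ?_⟩
  simp only [fund, Pell.Solution₁.x_mk]
  omega

lemma fS_fund : fS fund = 2 + Real.sqrt 3 := by
  simp [fS, fund]

lemma pell3 (u v : ℤ) (h : u ^ 2 - 3 * v ^ 2 = 1) :
    ∃ (n : ℤ) (ε : ℝ), (ε = 1 ∨ ε = -1) ∧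
      (u : ℝ) + v * Real.sqrt 3 = ε * (2 + Real.sqrt 3) ^ n := by
  obtain ⟨n, hn⟩ := fund_isFundamental.eq_zpow_or_neg_zpow (Pell.Solution₁.mk u v h)
  rcases hn with hn | hn
  · refine ⟨n, 1, Or.inl rfl, ?_⟩
    have h2 := congrArg fS hn
    rw [fS_zpow, fS_fund] at h2
    simpa [fS, one_mul] using h2
  · refine ⟨n, -1, Or.inr rfl, ?_⟩
    have h2 := congrArg fS hn
    rw [fS_neg, fS_zpow, fS_fund] at h2
    simp only [fS, Pell.Solution₁.x_mk, Pell.Solution₁.y_mk] at h2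
    rw [h2]; ring


/-- Case `k = 6` of Proposition 4.2: a primitive element `x + y√3` of `ℤ[√3]` with norm
in `[-6,-1]` has norm `-3` or `-2`; solutions of `Nm = -3` are `±√3·u_f^n` and solutions
of `Nm = -2` are `±(-1+√3)·u_f^n`, where `u_f = 2 + √3`. -/
theorem stmt7 (x y : ℤ) :
    (Int.gcd x y = 1 → -6 ≤ x^2 - 3 * y^2 → x^2 - 3 * y^2 ≤ -1 →
      x^2 - 3 * y^2 = -3 ∨ x^2 - 3 * y^2 = -2) ∧
    (x^2 - 3 * y^2 = -3 → ∃ (n : ℤ) (ε : ℝ), (ε = 1 ∨ ε = -1) ∧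
      (x : ℝ) + y * Real.sqrt 3 = ε * Real.sqrt 3 * (2 + Real.sqrt 3) ^ n) ∧
    (x^2 - 3 * y^2 = -2 → ∃ (n : ℤ) (ε : ℝ), (ε = 1 ∨ ε = -1) ∧
      (x : ℝ) + y * Real.sqrt 3 = ε * (-1 + Real.sqrt 3) * (2 + Real.sqrt 3) ^ n) := by
  refine ⟨?_, ?_, ?_⟩
  · -- part 1
    intro hg h1 h2
    by_contra hc
    push_neg at hc
    have hcases : x^2 - 3*y^2 = -1 ∨ x^2 - 3*y^2 = -4 ∨ x^2 - 3*y^2 = -6 ∨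
        x^2 - 3*y^2 = -5 := by omega
    have h9 : ∀ a b : ZMod 9, a^2 - 3*b^2 ≠ -1 ∧ a^2 - 3*b^2 ≠ -4 ∧ a^2 - 3*b^2 ≠ -6 := by
      decide
    rcases hcases with hh | hh | hh | hh
    · have := congrArg (fun t : ℤ => (t : ZMod 9)) hh
      push_cast at this
      exact (h9 x y).1 this
    · have := congrArg (fun t : ℤ => (t : ZMod 9)) hh
      push_cast at this
      exact (h9 x y).2.1 this
    · have := congrArg (fun t : ℤ => (t : ZMod 9)) hh
      push_cast at this
      exact (h9 x y).2.2 this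
    · have h5 : ∀ a b : ZMod 5, a^2 - 3*b^2 = -5 → a = 0 ∧ b = 0 := by decide
      have := congrArg (fun t : ℤ => (t : ZMod 5)) hh
      push_cast at this
      obtain ⟨ha, hb⟩ := h5 x y this
      rw [ZMod.intCast_zmod_eq_zero_iff_dvd] at ha hb
      have hd : (5 : ℤ) ∣ (Int.gcd x y : ℤ) := Int.dvd_coe_gcd ha hb
      rw [hg] at hd
      norm_num at hd
  · -- part 2 : norm -3
    intro h
    have h3 : (3 : ℤ) ∣ x := by
      refine Prime.dvd_of_dvd_pow Int.prime_three (n := 2) ⟨y^2 - 1, by linarith⟩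
    obtain ⟨m, rfl⟩ := h3
    have h' : y^2 - 3*m^2 = 1 := by nlinarith [h]
    obtain ⟨n, ε, hε, heq⟩ := pell3 y m h'
    refine ⟨n, ε, hε, ?_⟩
    rw [show ε * Real.sqrt 3 * (2 + Real.sqrt 3)^n =
        Real.sqrt 3 * ((y : ℝ) + m * Real.sqrt 3) from by rw [heq]; ring]
    push_cast
    linear_combination (-(m : ℝ)) * sqrt3_sq
  · -- part 3 : norm -2
    intro h
    have h4 : ∀ a b : ZMod 4, a^2 - 3*b^2 = -2 → a^2 = 1 ∧ b^2 = 1 := by decide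
    have hmod := congrArg (fun t : ℤ => (t : ZMod 4)) h
    push_cast at hmod
    obtain ⟨hx4, hy4⟩ := h4 x y hmod
    have hxodd : x % 2 = 1 := by
      rcases Int.even_or_odd x with ⟨a, rfl⟩ | ⟨a, rfl⟩
      · exfalso
        rw [show ((a + a : ℤ) : ZMod 4)^2 = 4 * (a : ZMod 4)^2 from by push_cast; ring,
          show (4 : ZMod 4) = 0 from rfl, zero_mul] at hx4
        exact absurd hx4 (by decide)
      · omega
    have hyodd : y % 2 = 1 := by
      rcases Int.even_or_odd y with ⟨a, rfl⟩ | ⟨a, rfl⟩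
      · exfalso
        rw [show ((a + a : ℤ) : ZMod 4)^2 = 4 * (a : ZMod 4)^2 from by push_cast; ring,
          show (4 : ZMod 4) = 0 from rfl, zero_mul] at hy4
        exact absurd hy4 (by decide)
      · omega
    obtain ⟨c, hc⟩ : ∃ c, x = 2*c + 1 := ⟨(x - 1)/2, by omega⟩
    obtain ⟨d, hd⟩ : ∃ d, y = 2*d + 1 := ⟨(y - 1)/2, by omega⟩
    subst hc hd
    have h' : (c + 3*d + 2)^2 - 3*(c + d + 1)^2 = 1 := by nlinarith [h]
    obtain ⟨n, ε, hε, heq⟩ := pell3 (c + 3*d + 2) (c + d + 1) h'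
    refine ⟨n, ε, hε, ?_⟩
    push_cast at heq
    rw [show ε * (-1 + Real.sqrt 3) * (2 + Real.sqrt 3)^n =
        (-1 + Real.sqrt 3) * (((c:ℝ) + 3*d + 2) + ((c:ℝ) + d + 1) * Real.sqrt 3) from by
      rw [heq]; ring]
    push_cast
    linear_combination (-((c : ℝ) + d + 1)) * sqrt3_sq
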